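/- If two integer matrices $A$ and $B$ of the same size satisfy $A \equiv B \pmod{p^s}$ for a prime $p$, then for every $i < s$ the multiplicity of $p^i$ as a $p$-elementary divisor of $A$ equals that of $B$. -/

import Mathlib

/-- Two integer matrices are integrally equivalent if, after identifying the index sets
by bijections (a relabelling, which is a unimodular operation), one is obtained from the
other by multiplying on the left and right by unimodular integer matrices. -/
def IntEquiv {α β γ δ : Type*} [Fintype α] [Fintype β] [Fintype γ] [Fintype δ]
    [DecidableEq γ] [DecidableEq δ]
    (A : Matrix α β ℤ) (B : Matrix γ δ ℤ) : Prop :=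
  ∃ (er : α ≃ γ) (ec : β ≃ δ) (U : Matrix γ γ ℤ) (V : Matrix δ δ ℤ),
    IsUnit U.det ∧ IsUnit V.det ∧ U * (A.submatrix er.symm ec.symm) * V = B

/-- The `i`-th leading diagonal entry of a rectangular matrix (zero out of range). -/
def diagEntry {a b : ℕ} (D : Matrix (Fin a) (Fin b) ℤ) (i : ℕ) : ℤ :=
  if h : i < a ∧ i < b then D ⟨i, h.1⟩ ⟨i, h.2⟩ else 0

/-- The multiplicity of the prime power `p^e` as a `p`-elementary divisor of a matrix in
diagonal form: the number of nonzero leading diagonal entries whose `p`-adic valuation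
is exactly `e`. -/
def elemDivMult (p e : ℕ) {a b : ℕ} (D : Matrix (Fin a) (Fin b) ℤ) : ℕ :=
  ((Finset.range (min a b)).filter fun i =>
    diagEntry D i ≠ 0 ∧ (p : ℤ) ^ e ∣ diagEntry D i ∧ ¬ (p : ℤ) ^ (e + 1) ∣ diagEntry D i).card

namespace Stmt18Aux

open Matrix

variable {a b : ℕ}

/-- Vectors all of whose coordinates are divisible by `q`. -/
def divSub (a : ℕ) (q : ℤ) : Submodule ℤ (Fin a → ℤ) where
  carrier := {v | ∀ x, q ∣ v x}
  add_mem' := fun hv hw x => dvd_add (hv x) (hw x)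
  zero_mem' := fun _ => dvd_zero q
  smul_mem' := fun c _ hv x => (hv x).mul_left c

/-- Column span plus `q` times everything. -/
def NN (M : Matrix (Fin a) (Fin b) ℤ) (q : ℤ) : Submodule ℤ (Fin a → ℤ) :=
  LinearMap.range M.mulVecLin ⊔ divSub a q

/-- The number of cosets of `NN M q`. -/
noncomputable def Fcard (M : Matrix (Fin a) (Fin b) ℤ) (q : ℤ) : ℕ :=
  Nat.card ((Fin a → ℤ) ⧸ NN M q)

lemma NN_congr {A B : Matrix (Fin a) (Fin b) ℤ} {q : ℤ}
    (h : ∀ x y, q ∣ (A x y - B x y)) : NN A q = NN B q := by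
  have key : ∀ (A B : Matrix (Fin a) (Fin b) ℤ), (∀ x y, q ∣ (A x y - B x y)) →
      NN A q ≤ NN B q := by
    intro A B h
    refine sup_le ?_ le_sup_right
    rintro v ⟨u, rfl⟩
    have hv : A.mulVecLin u = B.mulVecLin u + (A - B).mulVecLin u := by
      simp [Matrix.mulVecLin_apply, Matrix.sub_mulVec]
    rw [hv]
    refine Submodule.add_mem _ (Submodule.mem_sup_left ⟨u, rfl⟩)
      (Submodule.mem_sup_right fun x => ?_)
    simp only [Matrix.mulVecLin_apply, Matrix.mulVec, dotProduct, Matrix.sub_apply]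
    exact Finset.dvd_sum fun y _ => (h x y).mul_right _
  refine le_antisymm (key A B h) (key B A fun x y => ?_)
  simpa using (h x y).neg_right

/-- linear equivalence from an invertible integer matrix -/
def matEquiv (W : Matrix (Fin a) (Fin a) ℤ) (h : Invertible W) :
    (Fin a → ℤ) ≃ₗ[ℤ] (Fin a → ℤ) :=
  { W.mulVecLin with
    invFun := (⅟W).mulVecLin
    left_inv := fun v => by
      simp [Matrix.mulVecLin_apply, Matrix.mulVec_mulVec]
    right_inv := fun v => by
      simp [Matrix.mulVecLin_apply, Matrix.mulVec_mulVec] }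

lemma matEquiv_coe (W : Matrix (Fin a) (Fin a) ℤ) (h : Invertible W) :
    (matEquiv W h : (Fin a → ℤ) →ₗ[ℤ] (Fin a → ℤ)) = W.mulVecLin := rfl

lemma dvd_mulVec {q : ℤ} {c : ℕ} (W : Matrix (Fin a) (Fin c) ℤ) {v : Fin c → ℤ}
    (hv : ∀ x, q ∣ v x) : ∀ x, q ∣ (W *ᵥ v) x := by
  intro x
  simp only [Matrix.mulVec, dotProduct]
  exact Finset.dvd_sum fun y _ => (hv y).mul_left _

lemma map_matEquiv_divSub (W : Matrix (Fin a) (Fin a) ℤ) (h : Invertible W) (q : ℤ) :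
    (divSub a q).map (matEquiv W h : (Fin a → ℤ) →ₗ[ℤ] (Fin a → ℤ)) = divSub a q := by
  apply le_antisymm
  · rintro v ⟨w, hw, rfl⟩
    exact dvd_mulVec W hw
  · intro v hv
    refine ⟨(⅟W).mulVecLin v, dvd_mulVec _ hv, ?_⟩
    simp [matEquiv_coe, Matrix.mulVecLin_apply, Matrix.mulVec_mulVec]

lemma Fcard_map_eq {M M' : Matrix (Fin a) (Fin b) ℤ} {q : ℤ}
    (e : (Fin a → ℤ) ≃ₗ[ℤ] (Fin a → ℤ)) (hmap : (NN M q).map (e : _ →ₗ[ℤ] _) = NN M' q) :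
    Fcard M q = Fcard M' q :=
  Nat.card_congr (Submodule.Quotient.equiv (NN M q) (NN M' q) e hmap).toEquiv

/-- right multiplication by a matrix with unit determinant -/
lemma Fcard_mul_right (M : Matrix (Fin a) (Fin b) ℤ) (V : Matrix (Fin b) (Fin b) ℤ)
    (hV : IsUnit V.det) (q : ℤ) : Fcard (M * V) q = Fcard M q := by
  have hinv : Invertible V := V.invertibleOfIsUnitDet hV
  have hsurj : LinearMap.range V.mulVecLin = ⊤ := by
    rw [LinearMap.range_eq_top]
    intro w
    exact ⟨(⅟V).mulVecLin w, by simp [Matrix.mulVecLin_apply, Matrix.mulVec_mulVec]⟩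
  unfold Fcard
  congr 2
  unfold NN
  rw [Matrix.mulVecLin_mul, LinearMap.range_comp_of_range_eq_top _ hsurj]

/-- left multiplication by a matrix with unit determinant -/
lemma Fcard_mul_left (M : Matrix (Fin a) (Fin b) ℤ) (U : Matrix (Fin a) (Fin a) ℤ)
    (hU : IsUnit U.det) (q : ℤ) : Fcard M q = Fcard (U * M) q := by
  have hinv : Invertible U := U.invertibleOfIsUnitDet hU
  refine Fcard_map_eq (matEquiv U hinv) ?_
  unfold NN
  rw [Submodule.map_sup, map_matEquiv_divSub, Matrix.mulVecLin_mul,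
    LinearMap.range_comp, matEquiv_coe]

/-- relabelling rows and columns -/
lemma Fcard_submatrix (M : Matrix (Fin a) (Fin b) ℤ) (er : Fin a ≃ Fin a)
    (ec : Fin b ≃ Fin b) (q : ℤ) :
    Fcard M q = Fcard (M.submatrix er.symm ec.symm) q := by
  refine Fcard_map_eq (LinearEquiv.funCongrLeft ℤ ℤ er.symm) ?_
  unfold NN
  rw [Submodule.map_sup]
  congr 1
  · apply le_antisymm
    · rintro v ⟨u, hu, rfl⟩
      obtain ⟨w, rfl⟩ := hu
      refine ⟨w ∘ ec.symm, ?_⟩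
      simp only [Matrix.mulVecLin_apply, Matrix.submatrix_mulVec_equiv]
      ext x
      simp [LinearEquiv.funCongrLeft, LinearMap.funLeft, Function.comp_def]
    · rintro v ⟨u, rfl⟩
      refine ⟨M.mulVecLin (u ∘ ec), ⟨u ∘ ec, rfl⟩, ?_⟩
      simp only [Matrix.mulVecLin_apply, Matrix.submatrix_mulVec_equiv]
      ext x
      simp [LinearEquiv.funCongrLeft, LinearMap.funLeft, Function.comp_def]
  · apply le_antisymm
    · rintro v ⟨w, hw, rfl⟩ x
      exact hw _
    · intro v hv
      exact ⟨v ∘ er, fun x => hv _,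
        by ext x; simp [LinearEquiv.funCongrLeft, LinearMap.funLeft, Function.comp_def]⟩

lemma Fcard_intEquiv {M M' : Matrix (Fin a) (Fin b) ℤ} (h : IntEquiv M M') (q : ℤ) :
    Fcard M q = Fcard M' q := by
  obtain ⟨er, ec, U, V, hU, hV, rfl⟩ := h
  calc Fcard M q = Fcard (M.submatrix er.symm ec.symm) q := Fcard_submatrix M er ec q
    _ = Fcard (U * M.submatrix er.symm ec.symm) q := Fcard_mul_left _ U hU q
    _ = Fcard (U * M.submatrix er.symm ec.symm * V) q := (Fcard_mul_right _ V hV q).symm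

/-- the diagonal entries of a rectangular matrix, as a function on row indices -/
def dvec (D : Matrix (Fin a) (Fin b) ℤ) : Fin a → ℤ :=
  fun x => if h : (x : ℕ) < b then D x ⟨x, h⟩ else 0

lemma mulVec_dvec {D : Matrix (Fin a) (Fin b) ℤ}
    (hD : ∀ (x : Fin a) (y : Fin b), (x : ℕ) ≠ (y : ℕ) → D x y = 0)
    (u : Fin b → ℤ) (x : Fin a) :
    (D *ᵥ u) x = dvec D x * (if h : (x : ℕ) < b then u ⟨x, h⟩ else 0) := by
  simp only [Matrix.mulVec, dotProduct, dvec]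
  by_cases h : (x : ℕ) < b
  · rw [dif_pos h, dif_pos h]
    refine Finset.sum_eq_single_of_mem (⟨(x : ℕ), h⟩ : Fin b) (Finset.mem_univ _)
      (fun y _ hy => ?_)
    simp only [hD x y (fun hxy => hy (by apply Fin.ext; exact hxy.symm)), zero_mul]
  · rw [dif_neg h, dif_neg h, mul_zero]
    refine Finset.sum_eq_zero fun y _ => ?_
    simp only [hD x y (fun hxy => h (hxy ▸ y.isLt)), zero_mul]

lemma NN_diag {D : Matrix (Fin a) (Fin b) ℤ}
    (hD : ∀ (x : Fin a) (y : Fin b), (x : ℕ) ≠ (y : ℕ) → D x y = 0) (q : ℤ) :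
    NN D q = Submodule.pi Set.univ
      (fun x : Fin a => Ideal.span {(Int.gcd (dvec D x) q : ℤ)}) := by
  apply le_antisymm
  · refine sup_le ?_ ?_
    · rintro v ⟨u, rfl⟩
      intro x _
      refine Ideal.mem_span_singleton.mpr ?_
      rw [Matrix.mulVecLin_apply, mulVec_dvec hD]
      exact Dvd.dvd.mul_right (Int.gcd_dvd_left _ _) _
    · intro v hv x _
      exact Ideal.mem_span_singleton.mpr (dvd_trans (Int.gcd_dvd_right _ _) (hv x))
  · intro v hv
    simp only [Submodule.mem_pi, Set.mem_univ, forall_true_left, Ideal.mem_span_singleton] at hv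
    set g : Fin a → ℤ := fun x => (Int.gcd (dvec D x) q : ℤ) with hg
    set u : Fin b → ℤ := fun y =>
      if h : (y : ℕ) < a then (v ⟨y, h⟩ / g ⟨y, h⟩) * Int.gcdA (dvec D ⟨y, h⟩) q else 0 with hu
    set w : Fin a → ℤ := fun x => q * ((v x / g x) * Int.gcdB (dvec D x) q) with hw
    refine Submodule.mem_sup.mpr ⟨D.mulVecLin u, ⟨u, rfl⟩, w, fun x => ⟨_, rfl⟩, ?_⟩
    ext x
    simp only [Pi.add_apply, Matrix.mulVecLin_apply]
    rw [mulVec_dvec hD]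
    have huval : dvec D x * (if h : (x : ℕ) < b then u ⟨x, h⟩ else 0) =
        dvec D x * ((v x / g x) * Int.gcdA (dvec D x) q) := by
      by_cases h : (x : ℕ) < b
      · rw [dif_pos h]
        simp only [hu]
        simp [x.isLt]
      · rw [dif_neg h]
        have : dvec D x = 0 := by rw [dvec, dif_neg h]
        rw [this, zero_mul, zero_mul]
    rw [huval, hw]
    have hbez : g x = dvec D x * Int.gcdA (dvec D x) q + q * Int.gcdB (dvec D x) q :=
      Int.gcd_eq_gcd_ab _ _
    have hgv : g x ∣ v x := hv x
    calc dvec D x * ((v x / g x) * Int.gcdA (dvec D x) q) +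
          q * ((v x / g x) * Int.gcdB (dvec D x) q)
        = (v x / g x) * (dvec D x * Int.gcdA (dvec D x) q + q * Int.gcdB (dvec D x) q) := by
          ring
      _ = (v x / g x) * g x := by rw [← hbez]
      _ = v x := Int.ediv_mul_cancel hgv

lemma nat_gcd_prime_pow {p : ℕ} (hp : p.Prime) {n : ℕ} (hn : n ≠ 0) (c : ℕ) :
    Nat.gcd n (p ^ c) = p ^ (min (n.factorization p) c) := by
  apply Nat.dvd_antisymm
  · obtain ⟨j, hj, hgcd⟩ := (Nat.dvd_prime_pow hp).mp (Nat.gcd_dvd_right n (p ^ c))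
    have hj2 : j ≤ n.factorization p :=
      (Nat.Prime.pow_dvd_iff_le_factorization hp hn).mp (hgcd ▸ Nat.gcd_dvd_left n (p ^ c))
    rw [hgcd]
    exact Nat.pow_dvd_pow p (le_min hj2 hj)
  · exact Nat.dvd_gcd (dvd_trans (Nat.pow_dvd_pow p (min_le_left _ _)) (Nat.ordProj_dvd n p))
      (Nat.pow_dvd_pow p (min_le_right _ _))

lemma int_gcd_prime_pow {p : ℕ} (hp : p.Prime) (d : ℤ) (c : ℕ) :
    Int.gcd d ((p : ℤ) ^ c) = p ^ (if d = 0 then c else min (d.natAbs.factorization p) c) := by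
  have habs : ((p : ℤ) ^ c).natAbs = p ^ c := by
    rw [Int.natAbs_pow, Int.natAbs_natCast]
  by_cases hd : d = 0
  · simp [hd, Int.gcd, habs]
  · rw [if_neg hd, Int.gcd, habs, nat_gcd_prime_pow hp (Int.natAbs_ne_zero.mpr hd)]

/-- the per-slot capped valuation used in counting -/
def mu (p : ℕ) (D : Matrix (Fin a) (Fin b) ℤ) (c : ℕ) (x : Fin a) : ℕ :=
  if dvec D x = 0 then c else min ((dvec D x).natAbs.factorization p) c

lemma Fcard_diag {p : ℕ} (hp : p.Prime) {D : Matrix (Fin a) (Fin b) ℤ}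
    (hD : ∀ (x : Fin a) (y : Fin b), (x : ℕ) ≠ (y : ℕ) → D x y = 0) (c : ℕ) :
    Fcard D ((p : ℤ) ^ c) = p ^ (∑ x : Fin a, mu p D c x) := by
  unfold Fcard
  rw [NN_diag hD]
  rw [Nat.card_congr (Submodule.quotientPi _).toEquiv, Nat.card_pi]
  have hcards : ∀ x : Fin a, Nat.card (ℤ ⧸ Ideal.span {(Int.gcd (dvec D x) ((p : ℤ) ^ c) : ℤ)})
      = p ^ (mu p D c x) := by
    intro x
    rw [Nat.card_congr (Int.quotientSpanNatEquivZMod _).toEquiv, Nat.card_zmod,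
      int_gcd_prime_pow hp, mu]
  rw [Finset.prod_congr rfl (fun x _ => hcards x), Finset.prod_pow_eq_pow_sum]

lemma dvd_cond_iff {p : ℕ} (hp : p.Prime) {d : ℤ} (hd : d ≠ 0) (i : ℕ) :
    ((p : ℤ) ^ i ∣ d ∧ ¬ (p : ℤ) ^ (i + 1) ∣ d) ↔ d.natAbs.factorization p = i := by
  have habs : ∀ j : ℕ, ((p : ℤ) ^ j ∣ d ↔ p ^ j ∣ d.natAbs) := by
    intro j
    rw [show ((p : ℤ) ^ j) = ((p ^ j : ℕ) : ℤ) by push_cast; ring, Int.natCast_dvd]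
  have hn : d.natAbs ≠ 0 := Int.natAbs_ne_zero.mpr hd
  rw [habs, habs, Nat.Prime.pow_dvd_iff_le_factorization hp hn,
    Nat.Prime.pow_dvd_iff_le_factorization hp hn]
  omega

lemma elemDivMult_eq_card {p : ℕ} (hp : p.Prime) (i : ℕ)
    (D : Matrix (Fin a) (Fin b) ℤ)
    (hD : ∀ (x : Fin a) (y : Fin b), (x : ℕ) ≠ (y : ℕ) → D x y = 0) :
    elemDivMult p i D = (Finset.univ.filter fun x : Fin a =>
      dvec D x ≠ 0 ∧ (dvec D x).natAbs.factorization p = i).card := by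
  classical
  have hde : ∀ (j : ℕ) (h1 : j < a) (h2 : j < b), diagEntry D j = dvec D ⟨j, h1⟩ := by
    intro j h1 h2
    rw [diagEntry, dif_pos ⟨h1, h2⟩, dvec, dif_pos h2]
  have hdz : ∀ x : Fin a, ¬ ((x : ℕ) < b) → dvec D x = 0 := by
    intro x h
    rw [dvec, dif_neg h]
  unfold elemDivMult
  symm
  refine Finset.card_bij (fun x _ => (x : ℕ)) ?_ ?_ ?_
  · intro x hx
    obtain ⟨-, hne, hfac⟩ := Finset.mem_filter.mp hx
    have h2 : (x : ℕ) < b := by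
      by_contra h
      exact hne (hdz x h)
    have h1 : (x : ℕ) < a := x.isLt
    have hdx : diagEntry D (x : ℕ) = dvec D x := hde (x : ℕ) h1 h2
    simp only [Finset.mem_filter, Finset.mem_range, hdx]
    exact ⟨by omega, hne, (dvd_cond_iff hp hne i).mpr hfac⟩
  · intro x hx y hy hxy
    exact Fin.ext hxy
  · intro j hj
    obtain ⟨hjr, hne, hcond⟩ := Finset.mem_filter.mp hj
    have hjm := Finset.mem_range.mp hjr
    have h1 : j < a := by omega
    have h2 : j < b := by omega
    have hdx : diagEntry D j = dvec D ⟨j, h1⟩ := hde j h1 h2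
    rw [hdx] at hne hcond
    refine ⟨⟨j, h1⟩, Finset.mem_filter.mpr ⟨Finset.mem_univ _, hne, ?_⟩, rfl⟩
    exact (dvd_cond_iff hp hne i).mp hcond

end Stmt18Aux

open Stmt18Aux

/-- If `A ≡ B (mod p^s)`, then for every `i < s` the multiplicity of `p^i` as a
`p`-elementary divisor of `A` equals that of `B`. -/
theorem stmt18 (a b : ℕ) (A B : Matrix (Fin a) (Fin b) ℤ) (p : ℕ) (hp : p.Prime) (s : ℕ)
    (hAB : ∀ (x : Fin a) (y : Fin b), (p : ℤ) ^ s ∣ (A x y - B x y))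
    (i : ℕ) (hi : i < s)
    (DA : Matrix (Fin a) (Fin b) ℤ)
    (hDAdiag : ∀ (x : Fin a) (y : Fin b), (x : ℕ) ≠ (y : ℕ) → DA x y = 0)
    (hDA : IntEquiv A DA)
    (DB : Matrix (Fin a) (Fin b) ℤ)
    (hDBdiag : ∀ (x : Fin a) (y : Fin b), (x : ℕ) ≠ (y : ℕ) → DB x y = 0)
    (hDB : IntEquiv B DB) :
    elemDivMult p i DA = elemDivMult p i DB := by
  classical
  -- the capped valuation sums agree for all caps at most `s`
  have hsum : ∀ c : ℕ, c ≤ s →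
      (∑ x : Fin a, mu p DA c x) = (∑ x : Fin a, mu p DB c x) := by
    intro c hc
    have e1 := Fcard_intEquiv hDA ((p : ℤ) ^ c)
    have e2 := Fcard_intEquiv hDB ((p : ℤ) ^ c)
    have e3 : Fcard A ((p : ℤ) ^ c) = Fcard B ((p : ℤ) ^ c) := by
      unfold Fcard
      rw [NN_congr (fun x y => dvd_trans (pow_dvd_pow _ hc) (hAB x y))]
    have h1 : Fcard DA ((p : ℤ) ^ c) = Fcard DB ((p : ℤ) ^ c) := by omega
    rw [Fcard_diag hp hDAdiag, Fcard_diag hp hDBdiag] at h1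
    exact Nat.pow_right_injective hp.two_le h1
  -- counts as sums of indicators
  have hcnt : ∀ (D : Matrix (Fin a) (Fin b) ℤ),
      (∀ (x : Fin a) (y : Fin b), (x : ℕ) ≠ (y : ℕ) → D x y = 0) →
      elemDivMult p i D = ∑ x : Fin a,
        (if dvec D x ≠ 0 ∧ (dvec D x).natAbs.factorization p = i then 1 else 0) := by
    intro D hD
    rw [elemDivMult_eq_card hp i D hD, Finset.card_filter]
  rcases Nat.eq_zero_or_pos i with hi0 | hip
  · -- case i = 0
    subst hi0
    have key : ∀ (D : Matrix (Fin a) (Fin b) ℤ),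
        (∀ (x : Fin a) (y : Fin b), (x : ℕ) ≠ (y : ℕ) → D x y = 0) →
        (∑ x : Fin a, mu p D 1 x) + elemDivMult p 0 D = a := by
      intro D hD
      rw [hcnt D hD, ← Finset.sum_add_distrib]
      have hslot : ∀ x : Fin a, mu p D 1 x +
          (if dvec D x ≠ 0 ∧ (dvec D x).natAbs.factorization p = 0 then 1 else 0) = 1 := by
        intro x
        unfold mu
        split_ifs <;> omega
      rw [Finset.sum_congr rfl (fun x _ => hslot x)]
      simp
    have kA := key DA hDAdiag
    have kB := key DB hDBdiag
    have h1 := hsum 1 (by omega)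
    omega
  · -- case i ≥ 1
    have key : ∀ (D : Matrix (Fin a) (Fin b) ℤ),
        (∀ (x : Fin a) (y : Fin b), (x : ℕ) ≠ (y : ℕ) → D x y = 0) →
        (∑ x : Fin a, mu p D (i + 1) x) + (∑ x : Fin a, mu p D (i - 1) x)
          + elemDivMult p i D = 2 * (∑ x : Fin a, mu p D i x) := by
      intro D hD
      rw [hcnt D hD, ← Finset.sum_add_distrib, ← Finset.sum_add_distrib]
      have hslot : ∀ x : Fin a, mu p D (i + 1) x + mu p D (i - 1) x +
          (if dvec D x ≠ 0 ∧ (dvec D x).natAbs.factorization p = i then 1 else 0)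
          = 2 * mu p D i x := by
        intro x
        unfold mu
        split_ifs <;> omega
      rw [Finset.sum_congr rfl (fun x _ => hslot x), ← Finset.mul_sum]
    have kA := key DA hDAdiag
    have kB := key DB hDBdiag
    have h1 := hsum (i + 1) (by omega)
    have h2 := hsum i (by omega)
    have h3 := hsum (i - 1) (by omega)
    omega
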